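/- The distinguishing number of the cycle graph Cₙ is 3 for n ∈ {3,4,5} and 2 for every n ≥ 6: for n ≥ 6 there is a distinguishing coloring of Cₙ with 2 colors, while for n ∈ {3,4,5} there is a distinguishing coloring with 3 colors but for every 2-coloring there is a nontrivial automorphism preserving it. -/

import Mathlib

/-- The cycle graph `Cₙ` on `Fin n`: `i` and `j` are adjacent iff they differ by `1`
modulo `n`. -/
def cycleGraph' (n : ℕ) [NeZero n] : SimpleGraph (Fin n) where
  Adj i j := i ≠ j ∧ (i + 1 = j ∨ j + 1 = i)
  symm := ⟨fun i j ⟨h1, h2⟩ => ⟨h1.symm, h2.symm⟩⟩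
  loopless := ⟨fun i ⟨h, _⟩ => h rfl⟩

namespace DNC
variable {n : ℕ} [NeZero n]
open scoped Fin.NatCast Fin.CommRing

lemma cast_ne_cast {a b : ℕ} (ha : a < n) (hb : b < n) (h : a ≠ b) :
    (a : Fin n) ≠ (b : Fin n) := by
  simp only [ne_eq, Fin.ext_iff, Fin.val_natCast,
    Nat.mod_eq_of_lt ha, Nat.mod_eq_of_lt hb]
  exact h

lemma sub_cast (a b : ℕ) (hb : b ≤ n) :
    (a : Fin n) - (b : Fin n) = ((a + (n - b) : ℕ) : Fin n) := by
  push_cast [hb]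
  rw [Fin.natCast_self]
  ring

lemma adj_iff (v w : Fin n) :
    (cycleGraph' n).Adj v w ↔ v ≠ w ∧ (v + 1 = w ∨ w + 1 = v) := Iff.rfl

def reflIso (n : ℕ) [NeZero n] (a : Fin n) : cycleGraph' n ≃g cycleGraph' n where
  toFun v := a - v
  invFun v := a - v
  left_inv v := sub_sub_cancel a v
  right_inv v := sub_sub_cancel a v
  map_rel_iff' := by
    intro v w
    show ((a - v ≠ a - w) ∧ ((a - v) + 1 = a - w ∨ (a - w) + 1 = a - v)) ↔
      (v ≠ w ∧ (v + 1 = w ∨ w + 1 = v))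
    constructor
    · rintro ⟨hne, h | h⟩
      · exact ⟨fun hvw => hne (by rw [hvw]), Or.inr (by linear_combination h)⟩
      · exact ⟨fun hvw => hne (by rw [hvw]), Or.inl (by linear_combination h)⟩
    · rintro ⟨hne, h | h⟩
      · exact ⟨fun hq => hne (by linear_combination -hq), Or.inr (by linear_combination h)⟩
      · exact ⟨fun hq => hne (by linear_combination -hq), Or.inl (by linear_combination h)⟩

@[simp] lemma reflIso_apply (a v : Fin n) : reflIso n a v = a - v := rfl

lemma reflIso_nontriv (hn : 3 ≤ n) (a : Fin n) : ∃ v, reflIso n a v ≠ v := by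
  by_cases ha : a = 0
  · refine ⟨1, ?_⟩
    rw [reflIso_apply, ha]
    intro h
    have h2 : (2 : Fin n) = 0 := by linear_combination -h
    have : ((2 : ℕ) : Fin n) ≠ ((0 : ℕ) : Fin n) :=
      cast_ne_cast (by omega) (by omega) (by omega)
    push_cast at this
    exact this h2
  · exact ⟨0, by rwa [reflIso_apply, sub_zero]⟩

lemma classify (hn : 3 ≤ n) (g : cycleGraph' n ≃g cycleGraph' n) :
    (∀ v, g v = g 0 + v) ∨ (∀ v, g v = g 0 - v) := by
  have h10 : (1 : Fin n) ≠ 0 := by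
    have := cast_ne_cast (n := n) (a := 1) (b := 0) (by omega) (by omega) (by omega)
    push_cast at this; exact this
  have h20 : (2 : Fin n) ≠ 0 := by
    have := cast_ne_cast (n := n) (a := 2) (b := 0) (by omega) (by omega) (by omega)
    push_cast at this; exact this
  -- step lemma
  have key : ∀ s : Fin n, (s = 1 ∨ s = -1) → ∀ x : Fin n,
      g (x + 1) = g x + s → g (x + 1 + 1) = g (x + 1) + s := by
    intro s hs x hstep
    have hadj : (cycleGraph' n).Adj (x + 1) (x + 1 + 1) :=
      ⟨fun h => h10 (by linear_combination -h), Or.inl rfl⟩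
    have hadj' := (g.map_adj_iff).mpr hadj
    obtain ⟨hne, hor⟩ := hadj'
    have hxx : g (x + 1 + 1) ≠ g x := by
      intro h
      have := g.toEquiv.injective h
      exact h20 (by linear_combination this)
    rcases hs with hs | hs
    · subst hs
      rcases hor with h | h
      · linear_combination -h
      · exfalso; exact hxx (by linear_combination h + hstep)
    · subst hs
      rcases hor with h | h
      · exfalso; exact hxx (by linear_combination -h + hstep)
      · linear_combination h
  -- base
  have hadj01 : (cycleGraph' n).Adj 0 1 := ⟨fun h => h10 h.symm, Or.inl (zero_add 1)⟩
  obtain ⟨-, hor⟩ := (g.map_adj_iff).mpr hadj01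
  set s : Fin n := g 1 - g 0 with hs_def
  have hg1 : g 1 = g 0 + s := by rw [hs_def]; ring
  have hs : s = 1 ∨ s = -1 := by
    rcases hor with h | h
    · left; rw [hs_def]; linear_combination -h
    · right; rw [hs_def]; linear_combination h
  have H : ∀ k : ℕ, g ((k : Fin n)) = g 0 + s * k ∧
      g ((k : Fin n) + 1) = g 0 + s * ((k : Fin n) + 1) := by
    intro k
    induction k with
    | zero => constructor <;> simp [hg1]
    | succ k ih =>
      have hstep : g ((k : Fin n) + 1) = g ((k : Fin n)) + s := by
        rw [ih.1, ih.2]; ring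
      have h2 := key s hs (k : Fin n) hstep
      constructor
      · push_cast
        rw [ih.2]
      · push_cast
        rw [h2, ih.2]
        ring
  have Hall : ∀ v : Fin n, g v = g 0 + s * v := by
    intro v
    have := (H v.val).1
    rwa [Fin.cast_val_eq_self] at this
  rcases hs with hs | hs
  · left; intro v; rw [Hall v, hs, one_mul]
  · right; intro v; rw [Hall v, hs]; ring

end DNC

namespace DNC
variable {n : ℕ} [NeZero n]
open scoped Fin.NatCast Fin.CommRing

lemma refl_exists3 : ∀ c : Fin 3 → Fin 2, ∃ a : Fin 3, ∀ v, c (a - v) = c v := by decide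
lemma refl_exists4 : ∀ c : Fin 4 → Fin 2, ∃ a : Fin 4, ∀ v, c (a - v) = c v := by decide
lemma refl_exists5 : ∀ c : Fin 5 → Fin 2, ∃ a : Fin 5, ∀ v, c (a - v) = c v := by decide

/-- three-coloring distinguishing for any n ≥ 3 -/
lemma three_color (hn : 3 ≤ n) :
    ∃ c : Fin n → Fin 3,
      ∀ g : cycleGraph' n ≃g cycleGraph' n, (∀ v, c (g v) = c v) → ∀ v, g v = v := by
  refine ⟨fun v => if v = 0 then 0 else if v = 1 then 1 else 2, ?_⟩
  intro g hg
  have hne1 : ((0 : Fin n) - 1) ≠ 0 := by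
    have h := sub_cast (n := n) 0 1 (by omega)
    rw [show ((0:ℕ) : Fin n) = 0 by push_cast; rfl, show ((1:ℕ) : Fin n) = 1 by push_cast; rfl] at h
    rw [h, show (0 : Fin n) = ((0:ℕ) : Fin n) by push_cast; rfl]
    exact cast_ne_cast (by omega) (by omega) (by omega)
  have hne2 : ((0 : Fin n) - 1) ≠ 1 := by
    have h := sub_cast (n := n) 0 1 (by omega)
    rw [show ((0:ℕ) : Fin n) = 0 by push_cast; rfl, show ((1:ℕ) : Fin n) = 1 by push_cast; rfl] at h
    rw [h, show (1 : Fin n) = ((1:ℕ) : Fin n) by push_cast; rfl]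
    exact cast_ne_cast (by omega) (by omega) (by omega)
  have h10 : (1 : Fin n) ≠ 0 := by
    have := cast_ne_cast (n := n) (a := 1) (b := 0) (by omega) (by omega) (by omega)
    push_cast at this; exact this
  have hg0 : g 0 = 0 := by
    have h0 := hg 0
    dsimp only at h0
    by_cases h : g 0 = 0
    · exact h
    · exfalso
      by_cases h1 : g 0 = 1 <;> simp [h, h1] at h0 <;> omega
  rcases classify hn g with hrot | hrefl
  · intro v; rw [hrot v, hg0, zero_add]
  · exfalso
    have h1 := hg 1
    rw [hrefl 1, hg0] at h1
    dsimp only at h1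
    simp [hne1, hne2, h10] at h1
    have h20 : (2 : Fin n) ≠ 0 := by
      have := cast_ne_cast (n := n) (a := 2) (b := 0) (by omega) (by omega) (by omega)
      push_cast at this; exact this
    exact h20 (by linear_combination -h1)

/-- 2-coloring part for n ≥ 6 -/
lemma two_color (hn : 6 ≤ n) :
    ∃ c : Fin n → Fin 2,
      ∀ g : cycleGraph' n ≃g cycleGraph' n, (∀ v, c (g v) = c v) → ∀ v, g v = v := by
  classical
  refine ⟨fun v => if v = 0 ∨ v = 1 ∨ v = 3 then 1 else 0, ?_⟩
  intro g hg
  have e0 : (0 : Fin n) = ((0:ℕ) : Fin n) := by push_cast; rfl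
  have e1 : (1 : Fin n) = ((1:ℕ) : Fin n) := by push_cast; rfl
  have e2 : (2 : Fin n) = ((2:ℕ) : Fin n) := by push_cast; rfl
  have e3 : (3 : Fin n) = ((3:ℕ) : Fin n) := by push_cast; rfl
  have e4 : (4 : Fin n) = ((4:ℕ) : Fin n) := by push_cast; rfl
  have hmem : ∀ v : Fin n, ((g v = 0 ∨ g v = 1 ∨ g v = 3) ↔ (v = 0 ∨ v = 1 ∨ v = 3)) := by
    intro v
    have h := hg v
    by_cases h1 : g v = 0 ∨ g v = 1 ∨ g v = 3 <;>
      by_cases h2 : v = 0 ∨ v = 1 ∨ v = 3 <;>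
      simp only [h1, h2, if_pos, if_neg, if_true, if_false] at h ⊢ <;> first | tauto | exact absurd h (by decide) | exact absurd h.symm (by decide)
  have notS : ∀ a b c : ℕ, a < n → a ≠ 0 → a ≠ 1 → a ≠ 3 →
      ¬(((a:ℕ) : Fin n) = 0 ∨ ((a:ℕ) : Fin n) = 1 ∨ ((a:ℕ) : Fin n) = 3) := by
    intro a _ _ ha h0 h1 h3
    rw [e0, e1, e3]
    push_neg
    exact ⟨cast_ne_cast ha (by omega) h0, cast_ne_cast ha (by omega) h1,
      cast_ne_cast ha (by omega) h3⟩
  rcases classify (by omega) g with hrot | hrefl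
  · have ha : g 0 = 0 ∨ g 0 = 1 ∨ g 0 = 3 := by
      have := (hmem 0).mpr (Or.inl rfl)
      rwa [hrot 0, add_zero] at this
    rcases ha with ha | ha | ha
    · intro v; rw [hrot v, ha, zero_add]
    · exfalso
      have := (hmem 1).mpr (Or.inr (Or.inl rfl))
      rw [hrot 1, ha, show (1 : Fin n) + 1 = 2 by rw [e1, e2]; push_cast; ring] at this
      exact notS 2 0 0 (by omega) (by omega) (by omega) (by omega) (by rwa [← e2])
    · exfalso
      have := (hmem 1).mpr (Or.inr (Or.inl rfl))
      rw [hrot 1, ha, show (3 : Fin n) + 1 = 4 by rw [e1, e3, e4]; push_cast; ring] at this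
      exact notS 4 0 0 (by omega) (by omega) (by omega) (by omega) (by rwa [← e4])
  · exfalso
    have ha : g 0 = 0 ∨ g 0 = 1 ∨ g 0 = 3 := by
      have := (hmem 0).mpr (Or.inl rfl)
      rwa [hrefl 0, sub_zero] at this
    rcases ha with ha | ha | ha
    · have := (hmem 1).mpr (Or.inr (Or.inl rfl))
      rw [hrefl 1, ha, show (0 : Fin n) - 1 = ((n - 1 : ℕ) : Fin n) by
        rw [e0, e1, sub_cast 0 1 (by omega)]
        norm_num] at this
      exact notS (n-1) 0 0 (by omega) (by omega) (by omega) (by omega) this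
    · have := (hmem 3).mpr (Or.inr (Or.inr rfl))
      rw [hrefl 3, ha, show (1 : Fin n) - 3 = ((n - 2 : ℕ) : Fin n) by
        rw [e1, e3, sub_cast 1 3 (by omega)]
        congr 1
        omega] at this
      exact notS (n-2) 0 0 (by omega) (by omega) (by omega) (by omega) this
    · have := (hmem 1).mpr (Or.inr (Or.inl rfl))
      rw [hrefl 1, ha, show (3 : Fin n) - 1 = ((2 : ℕ) : Fin n) by
        rw [e1, e3, ← Nat.cast_sub (by omega)]] at this
      exact notS 2 0 0 (by omega) (by omega) (by omega) (by omega) this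

end DNC


/-- The distinguishing number of the cycle `Cₙ` is 3 for `n ∈ {3,4,5}`
and 2 for `n ≥ 6`. -/
theorem distinguishing_number_cycle (n : ℕ) [NeZero n] :
    ((n = 3 ∨ n = 4 ∨ n = 5) →
      (∃ c : Fin n → Fin 3,
        ∀ g : cycleGraph' n ≃g cycleGraph' n, (∀ v, c (g v) = c v) → ∀ v, g v = v) ∧
      (∀ c : Fin n → Fin 2,
        ∃ g : cycleGraph' n ≃g cycleGraph' n, (∃ v, g v ≠ v) ∧ ∀ v, c (g v) = c v)) ∧
    (6 ≤ n →
      (∃ c : Fin n → Fin 2,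
        ∀ g : cycleGraph' n ≃g cycleGraph' n, (∀ v, c (g v) = c v) → ∀ v, g v = v) ∧
      (∃ g : cycleGraph' n ≃g cycleGraph' n, ∃ v, g v ≠ v)) := by
  constructor
  · intro hn
    constructor
    · exact DNC.three_color (by rcases hn with h | h | h <;> omega)
    · intro c
      have h3 : (3:ℕ) ≤ n := by rcases hn with h | h | h <;> omega
      rcases hn with rfl | rfl | rfl
      · obtain ⟨a, ha⟩ := DNC.refl_exists3 c
        exact ⟨DNC.reflIso 3 a, DNC.reflIso_nontriv (by omega) a, ha⟩
      · obtain ⟨a, ha⟩ := DNC.refl_exists4 c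
        exact ⟨DNC.reflIso 4 a, DNC.reflIso_nontriv (by omega) a, ha⟩
      · obtain ⟨a, ha⟩ := DNC.refl_exists5 c
        exact ⟨DNC.reflIso 5 a, DNC.reflIso_nontriv (by omega) a, ha⟩
  · intro hn
    exact ⟨DNC.two_color hn, DNC.reflIso n 0, DNC.reflIso_nontriv (by omega) 0⟩
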